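/- Let μ = (μ_i)_{i≥1} be a probability sequence with all μ_i > 0, and let f = (f_i) be a bounded real sequence. Define Ent_μ(g) = Σ_i μ_i g_i log(g_i / Σ_j μ_j g_j) for nonnegative g. Then lim_{|a|→∞} Ent_μ((f+a)²) = 2·(Σ_i μ_i f_i² − (Σ_i μ_i f_i)²), i.e. twice the variance of f under μ. -/

import Mathlib

open Real

lemma log_quad {x : ℝ} (hx : |x| ≤ 1/2) :
    |Real.log (1+x) - (x - x^2/2)| ≤ 2*|x|^3 := by
  have h1 : |(-x)| < 1 := by rw [abs_neg]; linarith [abs_nonneg x]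
  have h := Real.abs_log_sub_add_sum_range_le h1 2
  have hsum : (∑ i ∈ Finset.range 2, (-x) ^ (i + 1) / (i + 1)) = -x + x^2/2 := by
    simp [Finset.sum_range_succ]; ring
  rw [hsum, abs_neg] at h
  have h2 : (1 : ℝ) - |x| ≥ 1/2 := by linarith
  have h3 : |x|^3 / (1 - |x|) ≤ 2*|x|^3 := by
    rw [div_le_iff₀ (by linarith)]
    nlinarith [pow_nonneg (abs_nonneg x) 3]
  have heq : Real.log (1 - -x) = Real.log (1 + x) := by ring_nf
  rw [heq] at h
  calc |Real.log (1+x) - (x - x^2/2)| = |(-x + x^2/2) + Real.log (1+x)| := by ring_nf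
    _ ≤ |x|^(2+1) / (1 - |x|) := h
    _ = |x|^3 / (1 - |x|) := by norm_num
    _ ≤ 2*|x|^3 := h3

lemma keyA {M t a : ℝ} (hM : 1 ≤ M) (ht : |t| ≤ M) (ha : 8*M^2 ≤ a) :
    |(t+a)^2 * (2 * Real.log (1 + t/a)) - (2*a*t + 3*t^2)| ≤ 100*M^3/a := by
  have ha0 : 0 < a := by nlinarith
  have htM : -M ≤ t ∧ t ≤ M := abs_le.1 ht
  have hMa : M ≤ a := by nlinarith
  have hu : |t/a| ≤ 1/2 := by
    rw [abs_div, abs_of_pos ha0, div_le_iff₀ ha0]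
    calc |t| ≤ M := ht
      _ ≤ 1/2*a := by nlinarith
  have hr := log_quad hu
  set r := Real.log (1 + t/a) - (t/a - (t/a)^2/2) with hrdef
  have hrb : |r| ≤ 2*M^3/a^3 := by
    calc |r| ≤ 2*|t/a|^3 := hr
      _ = 2*|t|^3/a^3 := by rw [abs_div, abs_of_pos ha0, div_pow]; ring
      _ ≤ 2*M^3/a^3 := by
          apply div_le_div_of_nonneg_right ?_ (by positivity)
          nlinarith [abs_nonneg t, pow_le_pow_left₀ (abs_nonneg t) ht 3]
  have hid : (t+a)^2 * (2 * Real.log (1 + t/a)) - (2*a*t + 3*t^2)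
      = (t+a)^2 * (2*r) - t^4/a^2 := by
    have hlog : Real.log (1 + t/a) = r + (t/a - (t/a)^2/2) := by rw [hrdef]; ring
    rw [hlog]; field_simp; ring
  rw [hid]
  have hsq : (t+a)^2 ≤ 4*a^2 := by nlinarith
  have h1 : |(t+a)^2 * (2*r)| ≤ 16*M^3/a := by
    rw [abs_mul, abs_of_nonneg (by positivity : (0:ℝ) ≤ (t+a)^2), abs_mul]
    have : (t+a)^2 * (|2| * |r|) ≤ 4*a^2 * (2 * (2*M^3/a^3)) := by
      apply mul_le_mul hsq ?_ (by positivity) (by positivity)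
      rw [abs_two]
      nlinarith [abs_nonneg r]
    calc (t+a)^2 * (|2| * |r|) ≤ 4*a^2 * (2 * (2*M^3/a^3)) := this
      _ = 16*M^3/a := by field_simp; ring
  have h2 : |t^4/a^2| ≤ M^3/a := by
    rw [abs_div, abs_of_pos (by positivity : (0:ℝ) < a^2), div_le_div_iff₀ (by positivity) ha0]
    have ht4 : |t^4| ≤ M^4 := by
      rw [abs_pow]
      exact pow_le_pow_left₀ (abs_nonneg t) ht 4
    have hM4 : M^4 ≤ M^3 * a := by nlinarith [mul_nonneg (pow_nonneg (by linarith : (0:ℝ) ≤ M) 3) (by linarith : (0:ℝ) ≤ a - M)]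
    nlinarith [mul_le_mul_of_nonneg_right ht4 ha0.le, mul_le_mul_of_nonneg_right hM4 ha0.le]
  calc |(t+a)^2 * (2*r) - t^4/a^2| ≤ |(t+a)^2 * (2*r)| + |t^4/a^2| := abs_sub _ _
    _ ≤ 16*M^3/a + M^3/a := by linarith
    _ ≤ 100*M^3/a := by
        rw [← add_div, div_le_div_iff_of_pos_right ha0]
        nlinarith


lemma arith3 {M q t a : ℝ} (hM : 1 ≤ M) (ht2 : t^2 ≤ M^2) (hq0 : 0 ≤ q)
    (hq : q ≤ M^2) (hMa : M ≤ a) (ha0 : 0 < a) :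
    |q*t^2 - q^2/2| * a ≤ 2*M^3 * a^2 := by
  have hM0 : (0:ℝ) < M := by linarith
  have h1 : q*t^2 ≤ M^2*M^2 := mul_le_mul hq ht2 (sq_nonneg t) (by positivity)
  have h2 : q*q ≤ M^2*M^2 := mul_le_mul hq hq hq0 (by positivity)
  have hb : |q*t^2 - q^2/2| ≤ 2*M^4 := by
    rw [abs_le]
    constructor <;> nlinarith [mul_nonneg hq0 (sq_nonneg t)]
  have hM4 : M^4 ≤ M^3 * a := by
    nlinarith [mul_nonneg (mul_nonneg (sq_nonneg M) (by linarith : (0:ℝ) ≤ M - 1)) ha0.le]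
  nlinarith [mul_le_mul_of_nonneg_right hb ha0.le,
    mul_le_mul_of_nonneg_right (mul_le_mul_of_nonneg_right hM4 ha0.le) (le_of_lt ha0)]

lemma arith4 {M t m q a : ℝ} (hM : 1 ≤ M) (htM : -M ≤ t ∧ t ≤ M) (ht2 : t^2 ≤ M^2)
    (hN : |2*m*a+q| ≤ 3*M*a) (hMa : M ≤ a) (ha0 : 0 < a) :
    |(t^2+2*t*a) * (2*m*a+q)^2| * a ≤ 14*M^3 * (2*a^4) := by
  have hM0 : (0:ℝ) < M := by linarith
  have hA : |t^2+2*t*a| ≤ 3*M*a := by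
    rw [abs_le]
    constructor <;>
      nlinarith [mul_le_mul_of_nonneg_right htM.2 ha0.le,
        mul_le_mul_of_nonneg_right htM.1 ha0.le, sq_nonneg t, mul_pos hM0 ha0]
  have hB : (2*m*a+q)^2 ≤ 9*M^2*a^2 := by
    nlinarith [sq_abs (2*m*a+q), pow_le_pow_left₀ (abs_nonneg (2*m*a+q)) hN 2]
  have hAB : |t^2+2*t*a| * (2*m*a+q)^2 ≤ (3*M*a)*(9*M^2*a^2) :=
    mul_le_mul hA hB (sq_nonneg _) (by positivity)
  rw [abs_mul, abs_of_nonneg (sq_nonneg (2*m*a+q))]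
  nlinarith [mul_le_mul_of_nonneg_right hAB ha0.le,
    mul_nonneg (mul_nonneg (by positivity : (0:ℝ) ≤ M^3) (by positivity : (0:ℝ) ≤ a^3)) ha0.le]

set_option maxHeartbeats 1000000 in
lemma keyB {M t m q a : ℝ} (hM : 1 ≤ M) (ht : |t| ≤ M) (hm : |m| ≤ M)
    (hq0 : 0 ≤ q) (hq : q ≤ M^2) (ha : 8*M^2 ≤ a) :
    |(t+a)^2 * Real.log (1 + (2*m*a+q)/a^2) - (2*m*a + q - 2*m^2 + 4*m*t)|
      ≤ 300*M^3/a := by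
  have hM0 : (0:ℝ) < M := by linarith
  have ha0 : 0 < a := by nlinarith
  have hMa : M ≤ a := by nlinarith
  have hM2a : M^2 ≤ a := by nlinarith
  have htM := abs_le.1 ht
  have hmM := abs_le.1 hm
  have hN : |2*m*a+q| ≤ 3*M*a := by
    rw [abs_le]
    constructor <;> nlinarith [mul_le_mul_of_nonneg_right hmM.2 ha0.le,
      mul_le_mul_of_nonneg_right hmM.1 ha0.le]
  have hε : |(2*m*a+q)/a^2| ≤ 3*M/a := by
    rw [abs_div, abs_of_pos (by positivity : (0:ℝ) < a^2), div_le_div_iff₀ (by positivity) ha0]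
    nlinarith [mul_le_mul_of_nonneg_right hN ha0.le]
  have hεhalf : |(2*m*a+q)/a^2| ≤ 1/2 := by
    refine hε.trans ?_
    rw [div_le_iff₀ ha0]; nlinarith
  have hr := log_quad hεhalf
  set ε := (2*m*a+q)/a^2 with hεdef
  set r := Real.log (1 + ε) - (ε - ε^2/2) with hrdef
  have hrb : |r| ≤ 54*M^3/a^3 := by
    refine hr.trans ?_
    have h3 : |ε|^3 ≤ (3*M/a)^3 := pow_le_pow_left₀ (abs_nonneg ε) hε 3
    calc 2*|ε|^3 ≤ 2*(3*M/a)^3 := by linarith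
      _ = 54*M^3/a^3 := by field_simp; ring
  have hid : (t+a)^2 * Real.log (1 + ε) - (2*m*a + q - 2*m^2 + 4*m*t)
      = (t+a)^2 * r + (2*m*t^2 + 2*q*t - 2*m*q)/a + (q*t^2 - q^2/2)/a^2
        - ((t^2+2*t*a) * (2*m*a+q)^2)/(2*a^4) := by
    have hlog : Real.log (1 + ε) = r + (ε - ε^2/2) := by rw [hrdef]; ring
    rw [hlog, hεdef]; field_simp; ring
  rw [hid]
  have hsq : (t+a)^2 ≤ 4*a^2 := by nlinarith
  have h1 : |(t+a)^2 * r| ≤ 216*M^3/a := by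
    rw [abs_mul, abs_of_nonneg (by positivity : (0:ℝ) ≤ (t+a)^2)]
    have : (t+a)^2 * |r| ≤ 4*a^2 * (54*M^3/a^3) :=
      mul_le_mul hsq hrb (abs_nonneg r) (by positivity)
    calc (t+a)^2 * |r| ≤ 4*a^2 * (54*M^3/a^3) := this
      _ = 216*M^3/a := by field_simp; ring
  have hmt : |m| * |t| ^ 2 ≤ M * M^2 :=
    mul_le_mul hm (pow_le_pow_left₀ (abs_nonneg t) ht 2) (by positivity) (by linarith)
  have ht2 : t^2 ≤ M^2 := sq_le_sq' htM.1 htM.2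
  have h2 : |(2*m*t^2 + 2*q*t - 2*m*q)/a| ≤ 6*M^3/a := by
    rw [abs_div, abs_of_pos ha0, div_le_div_iff₀ ha0 ha0]
    have e1 : |2*m*t^2| ≤ 2*M^3 := by
      rw [abs_mul, abs_mul, abs_two, abs_pow]; nlinarith
    have e2 : |2*q*t| ≤ 2*M^3 := by
      rw [abs_mul, abs_mul, abs_two, abs_of_nonneg hq0]
      nlinarith [mul_le_mul hq ht (abs_nonneg t) (by positivity : (0:ℝ) ≤ M^2)]
    have e3 : |2*m*q| ≤ 2*M^3 := by
      rw [abs_mul, abs_mul, abs_two, abs_of_nonneg hq0]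
      nlinarith [mul_le_mul hm hq (by exact hq0) hM0.le]
    have habs : |2*m*t^2 + 2*q*t - 2*m*q| ≤ 6*M^3 := by
      calc |2*m*t^2 + 2*q*t - 2*m*q| ≤ |2*m*t^2 + 2*q*t| + |2*m*q| := abs_sub _ _
        _ ≤ |2*m*t^2| + |2*q*t| + |2*m*q| := by linarith [abs_add_le (2*m*t^2) (2*q*t)]
        _ ≤ 6*M^3 := by linarith
    nlinarith [mul_le_mul_of_nonneg_right habs ha0.le, mul_nonneg (mul_nonneg (by positivity : (0:ℝ) ≤ 6*M^3) ha0.le) ha0.le]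
  have h3 : |(q*t^2 - q^2/2)/a^2| ≤ 2*M^3/a := by
    rw [abs_div, abs_of_pos (by positivity : (0:ℝ) < a^2), div_le_div_iff₀ (by positivity) ha0]
    exact arith3 hM ht2 hq0 hq hMa ha0
  have h4 : |(t^2+2*t*a) * (2*m*a+q)^2 / (2*a^4)| ≤ 14*M^3/a := by
    rw [abs_div, abs_of_pos (by positivity : (0:ℝ) < 2*a^4), div_le_div_iff₀ (by positivity) ha0]
    exact arith4 hM htM ht2 hN hMa ha0
  calc |(t+a)^2 * r + (2*m*t^2 + 2*q*t - 2*m*q)/a + (q*t^2 - q^2/2)/a^2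
        - ((t^2+2*t*a) * (2*m*a+q)^2)/(2*a^4)|
      ≤ |(t+a)^2 * r + (2*m*t^2 + 2*q*t - 2*m*q)/a + (q*t^2 - q^2/2)/a^2|
        + |(t^2+2*t*a) * (2*m*a+q)^2/(2*a^4)| := abs_sub _ _
    _ ≤ |(t+a)^2 * r| + |(2*m*t^2 + 2*q*t - 2*m*q)/a| + |(q*t^2 - q^2/2)/a^2|
        + |(t^2+2*t*a) * (2*m*a+q)^2/(2*a^4)| := by
        linarith [abs_add_le ((t+a)^2 * r + (2*m*t^2 + 2*q*t - 2*m*q)/a) ((q*t^2 - q^2/2)/a^2),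
          abs_add_le ((t+a)^2 * r) ((2*m*t^2 + 2*q*t - 2*m*q)/a)]
    _ ≤ 216*M^3/a + 6*M^3/a + 2*M^3/a + 14*M^3/a := by linarith
    _ ≤ 300*M^3/a := by
        rw [← add_div, ← add_div, ← add_div, div_le_div_iff_of_pos_right ha0]
        nlinarith [pow_nonneg hM0.le 3]

lemma key {M t m q a : ℝ} (hM : 1 ≤ M) (ht : |t| ≤ M) (hm : |m| ≤ M)
    (hq0 : 0 ≤ q) (hq : q ≤ M^2) (ha : 8*M^2 ≤ a) :
    |(t+a)^2 * Real.log ((t+a)^2 / (a^2 + 2*m*a + q))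
      - (2*a*t + 3*t^2 - (2*m*a + q - 2*m^2 + 4*m*t))| ≤ 400*M^3/a := by
  have hM0 : (0:ℝ) < M := by linarith
  have ha0 : 0 < a := by nlinarith
  have htM := abs_le.1 ht
  have hmM := abs_le.1 hm
  have hta : 0 < t + a := by nlinarith
  have hS : 0 < a^2 + 2*m*a + q := by nlinarith [mul_le_mul_of_nonneg_right hmM.1 ha0.le]
  have hlog : Real.log ((t+a)^2 / (a^2 + 2*m*a + q))
      = 2*Real.log (1 + t/a) - Real.log (1 + (2*m*a+q)/a^2) := by
    have h1 : (1:ℝ) + t/a = (t+a)/a := by field_simp; ring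
    have h2 : (1:ℝ) + (2*m*a+q)/a^2 = (a^2 + 2*m*a + q)/a^2 := by field_simp; ring
    rw [Real.log_div (by positivity) hS.ne', h1, h2,
      Real.log_div hta.ne' ha0.ne', Real.log_div hS.ne' (by positivity : (0:ℝ) < a^2).ne',
      Real.log_pow, Real.log_pow]
    push_cast
    ring
  have hA := keyA hM ht ha
  have hB := keyB hM ht hm hq0 hq ha
  have hid : (t+a)^2 * Real.log ((t+a)^2 / (a^2 + 2*m*a + q))
      - (2*a*t + 3*t^2 - (2*m*a + q - 2*m^2 + 4*m*t))
      = ((t+a)^2 * (2 * Real.log (1 + t/a)) - (2*a*t + 3*t^2))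
        - ((t+a)^2 * Real.log (1 + (2*m*a+q)/a^2) - (2*m*a + q - 2*m^2 + 4*m*t)) := by
    rw [hlog]; ring
  rw [hid]
  calc |_ - _| ≤ |(t+a)^2 * (2 * Real.log (1 + t/a)) - (2*a*t + 3*t^2)|
        + |(t+a)^2 * Real.log (1 + (2*m*a+q)/a^2) - (2*m*a + q - 2*m^2 + 4*m*t)| := abs_sub _ _
    _ ≤ 100*M^3/a + 300*M^3/a := by linarith
    _ = 400*M^3/a := by ring

lemma tendsto_top (μ f : ℕ → ℝ) (M : ℝ)
    (hμpos : ∀ i, 0 < μ i) (hμsum : Summable μ) (hμ1 : ∑' i, μ i = 1)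
    (hbdd : ∀ i, |f i| ≤ M) :
    Filter.Tendsto
      (fun a : ℝ => ∑' i, μ i * (f i + a) ^ 2 *
        Real.log ((f i + a) ^ 2 / ∑' j, μ j * (f j + a) ^ 2))
      Filter.atTop
      (nhds (2 * ((∑' i, μ i * f i ^ 2) - (∑' i, μ i * f i) ^ 2))) := by
  set K := M + 1 with hKdef
  have hK : (1:ℝ) ≤ K := by have := (abs_nonneg (f 0)).trans (hbdd 0); linarith
  have hbK : ∀ i, |f i| ≤ K := fun i => (hbdd i).trans (by linarith)
  have habs1 : Summable (fun i => |μ i * f i|) := by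
    apply Summable.of_nonneg_of_le (fun i => abs_nonneg _) ?_ (hμsum.mul_right K)
    intro i
    rw [abs_mul, abs_of_pos (hμpos i)]
    exact mul_le_mul_of_nonneg_left (hbK i) (hμpos i).le
  have hsf : Summable (fun i => μ i * f i) := habs1.of_abs
  have habs2 : Summable (fun i => |μ i * f i ^ 2|) := by
    apply Summable.of_nonneg_of_le (fun i => abs_nonneg _) ?_ (hμsum.mul_right (K^2))
    intro i
    rw [abs_mul, abs_of_pos (hμpos i), abs_pow]
    exact mul_le_mul_of_nonneg_left (pow_le_pow_left₀ (abs_nonneg _) (hbK i) 2) (hμpos i).le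
  have hsf2 : Summable (fun i => μ i * f i ^ 2) := habs2.of_abs
  set m := ∑' i, μ i * f i with hmdef
  set q := ∑' i, μ i * f i ^ 2 with hqdef
  have hm : |m| ≤ K := by
    calc |m| ≤ ∑' i, |μ i * f i| := by
          have := norm_tsum_le_tsum_norm (f := fun i => μ i * f i)
            (by simpa only [Real.norm_eq_abs] using habs1)
          simpa only [Real.norm_eq_abs] using this
      _ ≤ ∑' i, μ i * K := by
          apply Summable.tsum_le_tsum ?_ habs1 (hμsum.mul_right K)
          intro i
          rw [abs_mul, abs_of_pos (hμpos i)]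
          exact mul_le_mul_of_nonneg_left (hbK i) (hμpos i).le
      _ = K := by rw [tsum_mul_right, hμ1, one_mul]
  have hq0 : 0 ≤ q := tsum_nonneg (fun i => mul_nonneg (hμpos i).le (sq_nonneg _))
  have hq : q ≤ K^2 := by
    calc q ≤ ∑' i, μ i * K^2 := by
          apply Summable.tsum_le_tsum ?_ hsf2 (hμsum.mul_right (K^2))
          intro i
          apply mul_le_mul_of_nonneg_left ?_ (hμpos i).le
          calc f i ^ 2 ≤ |f i|^2 := by rw [sq_abs]
            _ ≤ K^2 := pow_le_pow_left₀ (abs_nonneg _) (hbK i) 2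
      _ = K^2 := by rw [tsum_mul_right, hμ1, one_mul]
  -- value of the inner sum
  have hSsum : ∀ a : ℝ, Summable (fun j => μ j * (f j + a)^2) := by
    intro a
    have : (fun j => μ j * (f j + a)^2)
        = fun j => μ j * f j ^ 2 + 2*a*(μ j * f j) + a^2 * μ j := by
      funext j; ring
    rw [this]
    exact (hsf2.add (hsf.mul_left (2*a))).add (hμsum.mul_left (a^2))
  have hS : ∀ a : ℝ, (∑' j, μ j * (f j + a)^2) = a^2 + 2*m*a + q := by
    intro a
    have h1 : (fun j => μ j * (f j + a)^2)
        = fun j => (μ j * f j ^ 2 + 2*a*(μ j * f j)) + a^2 * μ j := by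
      funext j; ring
    rw [h1, Summable.tsum_add (hsf2.add (hsf.mul_left (2*a))) (hμsum.mul_left (a^2)),
      Summable.tsum_add hsf2 (hsf.mul_left (2*a)), tsum_mul_left, tsum_mul_left, hμ1]
    ring
  have hkey : ∀ a : ℝ, 8*K^2 ≤ a →
      |(∑' i, μ i * (f i + a) ^ 2 *
          Real.log ((f i + a) ^ 2 / ∑' j, μ j * (f j + a) ^ 2)) - 2*(q - m^2)|
        ≤ 400*K^3/a := by
    intro a ha
    have ha0 : (0:ℝ) < a := by nlinarith
    set g : ℕ → ℝ := fun i => μ i * (f i + a) ^ 2 *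
      Real.log ((f i + a) ^ 2 / ∑' j, μ j * (f j + a) ^ 2) with hgdef
    set φ : ℕ → ℝ := fun i =>
      2*a*(f i) + 3*(f i)^2 - (2*m*a + q - 2*m^2 + 4*m*(f i)) with hφdef
    have hφrw : (fun i => μ i * φ i) = fun i =>
        ((2*a - 4*m)*(μ i * f i) + 3*(μ i * f i^2)) - (2*m*a + q - 2*m^2)*μ i := by
      funext i; rw [hφdef]; ring
    have hφsum : Summable (fun i => μ i * φ i) := by
      rw [hφrw]
      exact ((hsf.mul_left _).add (hsf2.mul_left 3)).sub (hμsum.mul_left _)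
    have hφtsum : ∑' i, μ i * φ i = 2*(q - m^2) := by
      rw [hφrw, Summable.tsum_sub ((hsf.mul_left _).add (hsf2.mul_left 3)) (hμsum.mul_left _),
        Summable.tsum_add (hsf.mul_left _) (hsf2.mul_left 3), tsum_mul_left, tsum_mul_left,
        tsum_mul_left, hμ1]
      ring
    have hterm : ∀ i, |g i - μ i * φ i| ≤ μ i * (400*K^3/a) := by
      intro i
      have hk := key hK (hbK i) hm hq0 hq ha
      have h1 : g i - μ i * φ i
          = μ i * ((f i + a)^2 * Real.log ((f i + a)^2/(a^2 + 2*m*a + q))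
            - (2*a*(f i) + 3*(f i)^2 - (2*m*a + q - 2*m^2 + 4*m*(f i)))) := by
        rw [hgdef, hφdef]
        simp only [hS a]
        ring
      rw [h1, abs_mul, abs_of_pos (hμpos i)]
      exact mul_le_mul_of_nonneg_left hk (hμpos i).le
    have herrabs : Summable (fun i => |g i - μ i * φ i|) :=
      Summable.of_nonneg_of_le (fun i => abs_nonneg _) hterm (hμsum.mul_right _)
    have herr : Summable (fun i => g i - μ i * φ i) := herrabs.of_abs
    have hgS : Summable g := by
      have h2 := herr.add hφsum
      have h3 : (fun i => (g i - μ i * φ i) + μ i * φ i) = g := by funext i; ring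
      rwa [h3] at h2
    have hsplit : (∑' i, g i) - 2*(q - m^2) = ∑' i, (g i - μ i * φ i) := by
      rw [Summable.tsum_sub hgS hφsum, hφtsum]
    rw [hsplit]
    calc |∑' i, (g i - μ i * φ i)| ≤ ∑' i, |g i - μ i * φ i| := by
          have := norm_tsum_le_tsum_norm (f := fun i => g i - μ i * φ i)
            (by simpa only [Real.norm_eq_abs] using herrabs)
          simpa only [Real.norm_eq_abs] using this
      _ ≤ ∑' i, μ i * (400*K^3/a) := Summable.tsum_le_tsum hterm herrabs (hμsum.mul_right _)
      _ = 400*K^3/a := by rw [tsum_mul_right, hμ1, one_mul]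
  have hlim : Filter.Tendsto (fun a : ℝ => 400*K^3/a) Filter.atTop (nhds 0) :=
    tendsto_const_nhds.div_atTop Filter.tendsto_id
  have hsq : Filter.Tendsto (fun a : ℝ =>
      (∑' i, μ i * (f i + a) ^ 2 *
        Real.log ((f i + a) ^ 2 / ∑' j, μ j * (f j + a) ^ 2)) - 2*(q - m^2))
      Filter.atTop (nhds 0) := by
    apply squeeze_zero_norm' ?_ hlim
    filter_upwards [Filter.eventually_ge_atTop (8*K^2)] with a ha
    simpa only [Real.norm_eq_abs] using hkey a ha
  have hfinal := hsq.add (tendsto_const_nhds :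
    Filter.Tendsto (fun _ : ℝ => 2*(q - m^2)) Filter.atTop (nhds (2*(q - m^2))))
  simp only [sub_add_cancel, zero_add] at hfinal
  convert hfinal using 2


/-- Lemma A.3: the entropy of large translations recovers twice the variance. -/
theorem ent_translation_variance (μ f : ℕ → ℝ) (M : ℝ)
    (hμpos : ∀ i, 0 < μ i) (hμsum : Summable μ) (hμ1 : ∑' i, μ i = 1)
    (hbdd : ∀ i, |f i| ≤ M) :
    Filter.Tendsto
      (fun a : ℝ => ∑' i, μ i * (f i + a) ^ 2 *
        Real.log ((f i + a) ^ 2 / ∑' j, μ j * (f j + a) ^ 2))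
      Filter.atTop
      (nhds (2 * ((∑' i, μ i * f i ^ 2) - (∑' i, μ i * f i) ^ 2))) ∧
    Filter.Tendsto
      (fun a : ℝ => ∑' i, μ i * (f i + a) ^ 2 *
        Real.log ((f i + a) ^ 2 / ∑' j, μ j * (f j + a) ^ 2))
      Filter.atBot
      (nhds (2 * ((∑' i, μ i * f i ^ 2) - (∑' i, μ i * f i) ^ 2))) := by
  constructor
  · exact tendsto_top μ f M hμpos hμsum hμ1 hbdd
  · have h := tendsto_top μ (fun i => -f i) M hμpos hμsum hμ1
      (fun i => by rw [abs_neg]; exact hbdd i)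
    have e1 : (∑' i, μ i * (-f i) ^ 2) = ∑' i, μ i * f i ^ 2 :=
      tsum_congr (fun i => by ring)
    have e2 : (∑' i, μ i * (-f i)) = -∑' i, μ i * f i := by
      rw [← tsum_neg]; exact tsum_congr (fun i => by ring)
    rw [e1, e2] at h
    have h2 := h.comp (Filter.tendsto_neg_atBot_atTop : Filter.Tendsto (fun a : ℝ => -a)
      Filter.atBot Filter.atTop)
    have hfun : (fun a : ℝ => ∑' i, μ i * (f i + a) ^ 2 *
        Real.log ((f i + a) ^ 2 / ∑' j, μ j * (f j + a) ^ 2))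
        = (fun a : ℝ => ∑' i, μ i * (-f i + a) ^ 2 *
            Real.log ((-f i + a) ^ 2 / ∑' j, μ j * (-f j + a) ^ 2)) ∘ (fun a : ℝ => -a) := by
      funext a
      simp only [Function.comp_apply]
      have einner : (∑' j, μ j * (-f j + -a) ^ 2) = ∑' j, μ j * (f j + a) ^ 2 :=
        tsum_congr (fun j => by ring_nf)
      rw [einner]
      exact tsum_congr (fun i => by rw [show (-f i + -a) ^ 2 = (f i + a) ^ 2 by ring])
    rw [hfun]
    convert h2 using 2
    ring
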